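/- With notation as follows: S = \mathbb{R}_{\geq 0}^d, \Omega = { (a,\infty) : a \geq 0 } \cup { [b,\infty) : b > 0 }, and for W \subseteq {1,...,d} and \sigma : W \to \Omega, Q_{W,\sigma} = Up({ a e_i : i \in W, a \in \sigma(i) }). Then for pairs (W,\sigma) and (W',\sigma'), one has Q_{W,\sigma} \subseteq Q_{W',\sigma'} if and only if W \subseteq W' and \sigma(i) \subseteq \sigma'(i) for all i \in W. -/
import Mathlib


/-- The nonnegative orthant `S = ℝ_{≥0}^d`. -/
def Snn (d : ℕ) : Set (Fin d → ℝ) := {s | ∀ i, 0 ≤ s i}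

/-- The up-set of `T` in `ℝ_{≥0}^d`. -/
def UpN (d : ℕ) (T : Set (Fin d → ℝ)) : Set (Fin d → ℝ) :=
  {s | ∃ t ∈ T, ∃ u ∈ Snn d, s = t + u}

/-- `Ω = {(a,∞) : a ≥ 0} ∪ {[b,∞) : b > 0}`. -/
def IsOmega (A : Set ℝ) : Prop :=
  (∃ a : ℝ, 0 ≤ a ∧ A = Set.Ioi a) ∨ (∃ b : ℝ, 0 < b ∧ A = Set.Ici b)

/-- The ideal set `I = Up({t·eᵢ + t·eⱼ : ij ∈ E, t ∈ S(ij)})` of the weighted graph. -/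
def edgeIdealSet (d : ℕ) (G : SimpleGraph (Fin d)) (w : Fin d → Fin d → Set ℝ) :
    Set (Fin d → ℝ) :=
  UpN d {x | ∃ i j t, G.Adj i j ∧ t ∈ w i j ∧ x = Pi.single i t + Pi.single j t}

/-- `Q_{W,σ} = Up({a·eᵢ : i ∈ W, a ∈ σ(i)})`. -/
def QWsigma (d : ℕ) (W : Finset (Fin d)) (σ : Fin d → Set ℝ) : Set (Fin d → ℝ) :=
  UpN d {x | ∃ i ∈ W, ∃ a ∈ σ i, x = Pi.single i a}

/-- `(W,σ)` is an interval vertex cover of `(Γ, S)`. -/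
def IsIVC (d : ℕ) (G : SimpleGraph (Fin d)) (w : Fin d → Fin d → Set ℝ)
    (W : Finset (Fin d)) (σ : Fin d → Set ℝ) : Prop :=
  (∀ i j, G.Adj i j → i ∈ W ∨ j ∈ W) ∧
  (∀ i j, G.Adj i j → (i ∈ W ∧ w i j ⊆ σ i) ∨ (j ∈ W ∧ w i j ⊆ σ j))

lemma omega_pos {A : Set ℝ} (h : IsOmega A) {a : ℝ} (ha : a ∈ A) : 0 < a := by
  rcases h with ⟨a0, h0, rfl⟩ | ⟨b, hb, rfl⟩
  · exact lt_of_le_of_lt h0 ha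
  · exact lt_of_lt_of_le hb ha

lemma omega_up {A : Set ℝ} (h : IsOmega A) {a b : ℝ} (ha : a ∈ A) (hab : a ≤ b) :
    b ∈ A := by
  rcases h with ⟨a0, h0, rfl⟩ | ⟨c, hc, rfl⟩
  · exact lt_of_lt_of_le ha hab
  · exact le_trans ha hab

lemma omega_nonempty {A : Set ℝ} (h : IsOmega A) : A.Nonempty := by
  rcases h with ⟨a0, h0, rfl⟩ | ⟨c, hc, rfl⟩
  · exact ⟨a0 + 1, by simp⟩
  · exact ⟨c, le_refl c⟩

/-- Key: if `a·eᵢ ∈ Q_{W',σ'}` then `i ∈ W'` and `a ∈ σ'(i)`. -/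
lemma single_mem {d : ℕ} {W' : Finset (Fin d)} {σ' : Fin d → Set ℝ}
    (hσ' : ∀ i ∈ W', IsOmega (σ' i)) {i : Fin d} {a : ℝ}
    (h : Pi.single i a ∈ QWsigma d W' σ') : i ∈ W' ∧ a ∈ σ' i := by
  obtain ⟨t, ⟨j, hj, b, hb, rfl⟩, u, hu, heq⟩ := h
  have hbpos : 0 < b := omega_pos (hσ' j hj) hb
  have hji : j = i := by
    by_contra hne
    have := congrFun heq j
    simp [Pi.single_apply, hne, Ne.symm hne] at this
    linarith [hu j]
  subst hji
  refine ⟨hj, omega_up (hσ' j hj) hb ?_⟩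
  have := congrFun heq j
  simp [Pi.single_apply] at this
  linarith [hu j]

/-- `Q_{W,σ} ⊆ Q_{W',σ'}` iff `W ⊆ W'` and `σ(i) ⊆ σ'(i)` for all
`i ∈ W` (Lemma 5.14(a)). -/
theorem stmt18 (d : ℕ) (W W' : Finset (Fin d)) (σ σ' : Fin d → Set ℝ)
    (hσ : ∀ i ∈ W, IsOmega (σ i)) (hσ' : ∀ i ∈ W', IsOmega (σ' i)) :
    QWsigma d W σ ⊆ QWsigma d W' σ' ↔ (W ⊆ W' ∧ ∀ i ∈ W, σ i ⊆ σ' i) := by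
  constructor
  · intro h
    have key : ∀ i ∈ W, ∀ a ∈ σ i, i ∈ W' ∧ a ∈ σ' i := by
      intro i hi a ha
      exact single_mem hσ' (h ⟨Pi.single i a, ⟨i, hi, a, ha, rfl⟩, 0, fun _ => le_refl 0,
        by simp⟩)
    refine ⟨fun i hi => ?_, fun i hi a ha => (key i hi a ha).2⟩
    obtain ⟨a, ha⟩ := omega_nonempty (hσ i hi)
    exact (key i hi a ha).1
  · rintro ⟨hW, hs⟩ x ⟨t, ⟨i, hi, a, ha, rfl⟩, u, hu, rfl⟩
    exact ⟨Pi.single i a, ⟨i, hW hi, a, hs i hi ha, rfl⟩, u, hu, rfl⟩
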